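/- Let l, m, n be nonnegative integers with gcd(l,m) = gcd(l,n) = 1. Then the space 𝔑^l_{m,n} admits a faithful (effective) continuous action of the 3-torus T³ = 𝕊¹ × 𝕊¹ × 𝕊¹. -/

import Mathlib

noncomputable section

open Quaternion

/-- The embedding of `ℂ` into the quaternions, sending `a + b·i` to the quaternion `a + b·i`. -/
def cq (x : ℂ) : Quaternion ℝ := ⟨x.re, x.im, 0, 0⟩

/-- The total space `𝕊³_ℍ × 𝕊³`: pairs of a unit quaternion and a point `(z,w) ∈ ℂ²`
with `|z|² + |w|² = 1`. -/
abbrev TotalSpace : Type :=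
  {a : Quaternion ℝ × (ℂ × ℂ) // ‖a.1‖ = 1 ∧ Complex.normSq a.2.1 + Complex.normSq a.2.2 = 1}

/-- The circle action `x · (p,(z,w)) = (p x^l, (x^m z, x^n w))` on the ambient space. -/
def circleAct (l m n : ℕ) (x : Circle) (a : Quaternion ℝ × (ℂ × ℂ)) :
    Quaternion ℝ × (ℂ × ℂ) :=
  (a.1 * cq ((x : ℂ) ^ l), ((x : ℂ) ^ m * a.2.1, (x : ℂ) ^ n * a.2.2))

/-- The orbit relation of the circle action on `𝕊³_ℍ × 𝕊³`. -/
def NRel (l m n : ℕ) (a b : TotalSpace) : Prop :=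
  ∃ x : Circle, circleAct l m n x a.1 = b.1

/-- The orbit space `𝔑^l_{m,n}`, with the quotient topology. -/
abbrev NSpace (l m n : ℕ) : Type := Quot (NRel l m n)

/-! ### Auxiliary material -/

namespace NSpaceAux

lemma cq_mul (x y : ℂ) : cq (x * y) = cq x * cq y := by
  ext <;> simp only [Quaternion.re_mul, Quaternion.imI_mul, Quaternion.imJ_mul, Quaternion.imK_mul] <;> simp [cq]

lemma cq_one : cq 1 = 1 := by
  ext <;> simp [cq]

lemma normSq_cq (c : ℂ) : normSq (cq c) = Complex.normSq c := by
  rw [Quaternion.normSq_def']; simp [cq, Complex.normSq_apply]; ring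

lemma norm_cq (c : ℂ) (h : Complex.normSq c = 1) : ‖cq c‖ = 1 := by
  have hq := Quaternion.normSq_eq_norm_mul_self (cq c)
  rw [normSq_cq, h] at hq
  nlinarith [norm_nonneg (cq c)]

def qi : Quaternion ℝ := ⟨0,1,0,0⟩
def qj : Quaternion ℝ := ⟨0,0,1,0⟩
def qk : Quaternion ℝ := ⟨0,0,0,1⟩

lemma mk_eq (a b c d : ℝ) :
    (⟨a,b,c,d⟩ : Quaternion ℝ) = (a : Quaternion ℝ) + b • qi + c • qj + d • qk := by
  ext <;> simp [Quaternion.re_smul, Quaternion.imI_smul, Quaternion.imJ_smul, Quaternion.imK_smul] <;>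
    simp [qi, qj, qk]

/-- The torus action rotating the two complex coordinates of a quaternion
`p = z₁ + z₂ j` independently: `cA s₁ s₂ (z₁ + z₂ j) = s₁ z₁ + (s₂ z₂) j`. -/
def cA (s₁ s₂ : ℂ) (p : Quaternion ℝ) : Quaternion ℝ :=
  ⟨s₁.re * p.re - s₁.im * p.imI, s₁.re * p.imI + s₁.im * p.re,
   s₂.re * p.imJ - s₂.im * p.imK, s₂.re * p.imK + s₂.im * p.imJ⟩

lemma continuous_cA : Continuous (fun x : (ℂ × ℂ) × Quaternion ℝ => cA x.1.1 x.1.2 x.2) := by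
  have hre : Continuous fun x : (ℂ × ℂ) × Quaternion ℝ => x.2.re :=
    Quaternion.continuous_re.comp continuous_snd
  have himI : Continuous fun x : (ℂ × ℂ) × Quaternion ℝ => x.2.imI :=
    Quaternion.continuous_imI.comp continuous_snd
  have himJ : Continuous fun x : (ℂ × ℂ) × Quaternion ℝ => x.2.imJ :=
    Quaternion.continuous_imJ.comp continuous_snd
  have himK : Continuous fun x : (ℂ × ℂ) × Quaternion ℝ => x.2.imK :=
    Quaternion.continuous_imK.comp continuous_snd
  have h1re : Continuous fun x : (ℂ × ℂ) × Quaternion ℝ => x.1.1.re :=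
    Complex.continuous_re.comp continuous_fst.fst
  have h1im : Continuous fun x : (ℂ × ℂ) × Quaternion ℝ => x.1.1.im :=
    Complex.continuous_im.comp continuous_fst.fst
  have h2re : Continuous fun x : (ℂ × ℂ) × Quaternion ℝ => x.1.2.re :=
    Complex.continuous_re.comp continuous_fst.snd
  have h2im : Continuous fun x : (ℂ × ℂ) × Quaternion ℝ => x.1.2.im :=
    Complex.continuous_im.comp continuous_fst.snd
  simp only [cA, mk_eq]
  exact ((((Quaternion.continuous_coe.comp ((h1re.mul hre).sub (h1im.mul himI))).add
    (((h1re.mul himI).add (h1im.mul hre)).smul continuous_const)).add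
    (((h2re.mul himJ).sub (h2im.mul himK)).smul continuous_const)).add
    (((h2re.mul himK).add (h2im.mul himJ)).smul continuous_const))

lemma cA_one (p : Quaternion ℝ) : cA 1 1 p = p := by ext <;> simp [cA]

lemma cA_mul (s₁ s₂ t₁ t₂ : ℂ) (p : Quaternion ℝ) :
    cA (s₁*t₁) (s₂*t₂) p = cA s₁ s₂ (cA t₁ t₂ p) := by
  ext <;> simp [cA, Complex.mul_re, Complex.mul_im] <;> ring

lemma cA_mul_cq (s₁ s₂ c : ℂ) (p : Quaternion ℝ) :
    cA s₁ s₂ (p * cq c) = cA s₁ s₂ p * cq c := by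
  ext <;> simp only [Quaternion.re_mul, Quaternion.imI_mul, Quaternion.imJ_mul, Quaternion.imK_mul] <;> simp only [cA] <;>
    simp only [Quaternion.re_mul, Quaternion.imI_mul, Quaternion.imJ_mul, Quaternion.imK_mul] <;> simp [cq] <;> ring

lemma normSq_cA (s₁ s₂ : ℂ) (p : Quaternion ℝ) (h1 : Complex.normSq s₁ = 1)
    (h2 : Complex.normSq s₂ = 1) : normSq (cA s₁ s₂ p) = normSq p := by
  rw [Complex.normSq_apply] at h1 h2
  rw [Quaternion.normSq_def', Quaternion.normSq_def']; simp only [cA]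
  nlinarith [sq_nonneg p.re, sq_nonneg p.imI]

lemma norm_cA (s₁ s₂ : ℂ) (p : Quaternion ℝ) (h1 : Complex.normSq s₁ = 1)
    (h2 : Complex.normSq s₂ = 1) (hp : ‖p‖ = 1) : ‖cA s₁ s₂ p‖ = 1 := by
  have h := Quaternion.normSq_eq_norm_mul_self (cA s₁ s₂ p)
  rw [normSq_cA s₁ s₂ p h1 h2, Quaternion.normSq_eq_norm_mul_self, hp] at h
  nlinarith [norm_nonneg (cA s₁ s₂ p)]

/-- The quaternion `r + r·j`. -/
def pt (r : ℝ) : Quaternion ℝ := ⟨r, 0, r, 0⟩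

/-- Key computation at the base point `(1+j)/√2` used to prove effectiveness. -/
lemma key (α σ ξ : ℂ) (r : ℝ) (hr : r ≠ 0)
    (h : cA α σ (pt r) * cq ξ = pt r) :
    α * ξ = 1 ∧ σ * (starRingEnd ℂ) ξ = 1 := by
  rw [Quaternion.ext_iff] at h
  obtain ⟨h1, h2, h3, h4⟩ := h
  simp only [Quaternion.re_mul, Quaternion.imI_mul, Quaternion.imJ_mul, Quaternion.imK_mul] at h1 h2 h3 h4
  simp only [pt, cA, cq, mul_zero, zero_mul, sub_zero, add_zero, zero_add, zero_sub,
    mul_one] at h1 h2 h3 h4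
  constructor <;> apply Complex.ext <;>
    simp only [Complex.mul_re, Complex.mul_im, Complex.one_re, Complex.one_im,
      Complex.conj_re, Complex.conj_im, mul_neg, neg_mul]
  · exact mul_right_cancel₀ hr (by linear_combination h1)
  · exact mul_right_cancel₀ hr (by linear_combination h2)
  · exact mul_right_cancel₀ hr (by linear_combination h3)
  · exact mul_right_cancel₀ hr (by linear_combination h4)

lemma circle_coe_pow (x : Circle) (k : ℕ) : ((x ^ k : Circle) : ℂ) = (x : ℂ) ^ k := by
  induction k with
  | zero => simp
  | succ k ih => rw [pow_succ, pow_succ, Circle.coe_mul, ih]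

variable (l m n : ℕ)

lemma circleAct_one (P : Quaternion ℝ × (ℂ × ℂ)) : circleAct l m n 1 P = P := by
  simp [circleAct, cq_one]

lemma circleAct_mul (x y : Circle) (P : Quaternion ℝ × (ℂ × ℂ)) :
    circleAct l m n x (circleAct l m n y P) = circleAct l m n (x * y) P := by
  simp only [circleAct, Circle.coe_mul, mul_pow, Prod.mk.injEq]
  refine ⟨?_, by ring, by ring⟩
  rw [mul_assoc, ← cq_mul, mul_comm ((y:ℂ)^l)]

/-- The circle action on the total space. -/
def CT (x : Circle) (P : TotalSpace) : TotalSpace :=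
  ⟨circleAct l m n x P.1, by
    obtain ⟨h1, h2⟩ := P.2
    refine ⟨?_, ?_⟩
    · simp only [circleAct]
      rw [norm_mul, h1, one_mul, norm_cq]
      rw [map_pow, Circle.normSq_coe, one_pow]
    · simp only [circleAct, Complex.normSq_mul, map_pow, Circle.normSq_coe, one_pow, one_mul]
      exact h2⟩

lemma continuous_CT (x : Circle) : Continuous (CT l m n x) := by
  apply Continuous.subtype_mk
  have hv : Continuous fun P : TotalSpace => P.1 := continuous_subtype_val
  exact ((hv.fst.mul continuous_const).prodMk
    ((continuous_const.mul hv.snd.fst).prodMk (continuous_const.mul hv.snd.snd)))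

lemma nrel_equiv : Equivalence (NRel l m n) where
  refl P := ⟨1, by rw [circleAct_one]⟩
  symm := by
    rintro P Q ⟨x, hx⟩
    refine ⟨x⁻¹, ?_⟩
    rw [← hx, circleAct_mul, inv_mul_cancel, circleAct_one]
  trans := by
    rintro P Q R ⟨x, hx⟩ ⟨y, hy⟩
    refine ⟨y * x, ?_⟩
    rw [← hy, ← hx, circleAct_mul]

lemma quot_mk_eq_iff (P Q : TotalSpace) :
    Quot.mk (NRel l m n) P = Quot.mk (NRel l m n) Q ↔ NRel l m n P Q := by
  rw [Quot.eq, (nrel_equiv l m n).eqvGen_iff]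

lemma isOpenQuotientMap_mk : IsOpenQuotientMap (Quot.mk (NRel l m n)) := by
  refine ⟨Quot.mk_surjective, continuous_quot_mk, ?_⟩
  intro U hU
  rw [← isQuotientMap_quot_mk.isOpen_preimage]
  have : Quot.mk (NRel l m n) ⁻¹' (Quot.mk (NRel l m n) '' U) =
      ⋃ x : Circle, CT l m n x ⁻¹' U := by
    ext P
    simp only [Set.mem_preimage, Set.mem_image, Set.mem_iUnion]
    constructor
    · rintro ⟨Q, hQ, hq⟩
      obtain ⟨x, hx⟩ := (quot_mk_eq_iff l m n Q P).mp hq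
      refine ⟨x⁻¹, ?_⟩
      have : CT l m n x⁻¹ P = Q := by
        apply Subtype.ext
        show circleAct l m n x⁻¹ P.1 = Q.1
        rw [← hx, circleAct_mul, inv_mul_cancel, circleAct_one]
      rw [this]; exact hQ
    · rintro ⟨x, hx⟩
      refine ⟨CT l m n x P, hx, ?_⟩
      rw [quot_mk_eq_iff]
      refine ⟨x⁻¹, ?_⟩
      show circleAct l m n x⁻¹ (circleAct l m n x P.1) = P.1
      rw [circleAct_mul, inv_mul_cancel, circleAct_one]
  rw [this]
  exact isOpen_iUnion fun x => (continuous_CT l m n x).isOpen_preimage U hU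

/-- The ambient `T³`-action, depending on Bézout coefficients `A`, `C`. -/
def tAct (A C : ℤ) (g : Circle × Circle × Circle) (P : Quaternion ℝ × (ℂ × ℂ)) :
    Quaternion ℝ × (ℂ × ℂ) :=
  (cA ((g.2.2 ^ A : Circle) : ℂ) ((g.1 : ℂ)) P.1,
   (((g.2.2 ^ (-C) : Circle) : ℂ) * P.2.1, (g.2.1 : ℂ) * P.2.2))

lemma tAct_one (A C : ℤ) (P : Quaternion ℝ × (ℂ × ℂ)) : tAct A C 1 P = P := by
  simp [tAct, cA_one]

lemma tAct_mul (A C : ℤ) (g h : Circle × Circle × Circle) (P : Quaternion ℝ × (ℂ × ℂ)) :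
    tAct A C (g * h) P = tAct A C g (tAct A C h P) := by
  simp only [tAct, Prod.fst_mul, Prod.snd_mul, mul_zpow, Circle.coe_mul, cA_mul, mul_assoc]

lemma tAct_circleAct (A C : ℤ) (g : Circle × Circle × Circle) (x : Circle)
    (P : Quaternion ℝ × (ℂ × ℂ)) :
    tAct A C (g) (circleAct l m n x P) = circleAct l m n x (tAct A C g P) := by
  simp only [tAct, circleAct, cA_mul_cq, Prod.mk.injEq]
  exact ⟨trivial, by ring, by ring⟩

/-- The `T³`-action on the total space. -/
def FT (A C : ℤ) (g : Circle × Circle × Circle) (P : TotalSpace) : TotalSpace :=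
  ⟨tAct A C g P.1, by
    obtain ⟨h1, h2⟩ := P.2
    refine ⟨norm_cA _ _ _ (Circle.normSq_coe _) (Circle.normSq_coe _) h1, ?_⟩
    simp only [tAct, Complex.normSq_mul, Circle.normSq_coe, one_mul]
    exact h2⟩

lemma FT_descend (A C : ℤ) (g : Circle × Circle × Circle) (P Q : TotalSpace)
    (h : NRel l m n P Q) : NRel l m n (FT A C g P) (FT A C g Q) := by
  obtain ⟨x, hx⟩ := h
  refine ⟨x, ?_⟩
  show circleAct l m n x (tAct A C g P.1) = tAct A C g Q.1
  rw [← tAct_circleAct l m n A C g x P.1, hx]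

lemma continuous_FT (A C : ℤ) :
    Continuous (fun q : (Circle × Circle × Circle) × TotalSpace => FT A C q.1 q.2) := by
  apply Continuous.subtype_mk
  have hv : Continuous fun q : (Circle × Circle × Circle) × TotalSpace => q.2.1 :=
    continuous_subtype_val.comp continuous_snd
  have hcoe : Continuous ((↑) : Circle → ℂ) := continuous_subtype_val
  have hu : Continuous fun q : (Circle × Circle × Circle) × TotalSpace => q.1.2.2 :=
    continuous_fst.snd.snd
  have hs : Continuous fun q : (Circle × Circle × Circle) × TotalSpace => (q.1.1 : ℂ) :=
    hcoe.comp continuous_fst.fst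
  have ht : Continuous fun q : (Circle × Circle × Circle) × TotalSpace => (q.1.2.1 : ℂ) :=
    hcoe.comp continuous_fst.snd.fst
  have huA : Continuous fun q : (Circle × Circle × Circle) × TotalSpace =>
      ((q.1.2.2 ^ A : Circle) : ℂ) := hcoe.comp ((continuous_zpow (G := Circle) A).comp hu)
  have huC : Continuous fun q : (Circle × Circle × Circle) × TotalSpace =>
      ((q.1.2.2 ^ (-C) : Circle) : ℂ) := hcoe.comp ((continuous_zpow (G := Circle) (-C)).comp hu)
  refine Continuous.prodMk ?_ (Continuous.prodMk ?_ ?_)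
  · exact continuous_cA.comp ((huA.prodMk hs).prodMk hv.fst)
  · exact huC.mul hv.snd.fst
  · exact ht.mul hv.snd.snd

end NSpaceAux

open NSpaceAux

/-- **`𝔑^l_{m,n}` admits an effective torus action.**
Let `l, m, n` be nonnegative integers with `gcd(l,m) = gcd(l,n) = 1`.  Then `𝔑^l_{m,n}`
admits a faithful (effective) continuous action of the 3-torus `T³ = 𝕊¹ × 𝕊¹ × 𝕊¹`:
there is a (jointly) continuous action map `ρ` such that `ρ 1 = id`,
`ρ (s·t) = ρ s ∘ ρ t`, and the only element acting as the identity is `1`. -/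
theorem NSpace_admits_effective_T3_action (l m n : ℕ)
    (hlm : Nat.gcd l m = 1) (hln : Nat.gcd l n = 1) :
    ∃ ρ : (Circle × Circle × Circle) → NSpace l m n → NSpace l m n,
      Continuous (fun q : (Circle × Circle × Circle) × NSpace l m n => ρ q.1 q.2) ∧
      (∀ X, ρ 1 X = X) ∧
      (∀ s t X, ρ (s * t) X = ρ s (ρ t X)) ∧
      (∀ t, (∀ X, ρ t X = X) → t = 1) := by
  classical
  set A : ℤ := Nat.gcdB l m with hA
  set C : ℤ := Nat.gcdA l m with hC
  have hBez : (l : ℤ) * C + (m : ℤ) * A = 1 := by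
    have h := Nat.gcd_eq_gcd_ab l m
    rw [hlm] at h
    exact_mod_cast h.symm
  refine ⟨fun g => Quot.map (FT A C g) (FT_descend l m n A C g), ?_, ?_, ?_, ?_⟩
  · -- continuity
    have hq := isOpenQuotientMap_mk l m n
    have hprod := IsOpenQuotientMap.id.prodMap hq
      (X := Circle × Circle × Circle)
    rw [← hprod.continuous_comp_iff]
    show Continuous fun q : (Circle × Circle × Circle) × TotalSpace =>
      Quot.mk (NRel l m n) (FT A C q.1 q.2)
    exact continuous_quot_mk.comp (continuous_FT A C)
  · -- identity
    intro X
    refine Quot.inductionOn X fun P => ?_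
    show Quot.mk _ (FT A C 1 P) = Quot.mk _ P
    congr 1
    exact Subtype.ext (tAct_one A C P.1)
  · -- composition
    intro g h X
    refine Quot.inductionOn X fun P => ?_
    show Quot.mk _ (FT A C (g * h) P) = Quot.mk _ (FT A C g (FT A C h P))
    congr 1
    exact Subtype.ext (tAct_mul A C g h P.1)
  · -- effectiveness
    rintro ⟨s, t₂, u⟩ h
    set r : ℝ := (Real.sqrt 2)⁻¹ with hrdef
    have hr2 : (Real.sqrt 2) ^ 2 = 2 := Real.sq_sqrt (by norm_num)
    have hrpos : 0 < r := by positivity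
    have hrne : r ≠ 0 := ne_of_gt hrpos
    have hrsq : r ^ 2 = 2⁻¹ := by
      rw [hrdef, inv_pow, hr2]
    have hP0mem : ‖pt r‖ = 1 ∧
        Complex.normSq ((r : ℝ) : ℂ) + Complex.normSq ((r : ℝ) : ℂ) = 1 := by
      constructor
      · have hq := Quaternion.normSq_eq_norm_mul_self (pt r)
        have hns : normSq (pt r) = 1 := by
          rw [Quaternion.normSq_def']; simp only [pt]
          nlinarith [hrsq]
        rw [hns] at hq
        nlinarith [norm_nonneg (pt r)]
      · rw [Complex.normSq_ofReal]
        nlinarith [hrsq]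
    set P0 : TotalSpace := ⟨(pt r, (((r:ℝ):ℂ), ((r:ℝ):ℂ))), hP0mem⟩ with hP0
    have h0 := h (Quot.mk _ P0)
    have hrel : NRel l m n (FT A C (s, t₂, u) P0) P0 := by
      rw [← quot_mk_eq_iff l m n]
      exact h0
    obtain ⟨x, hx⟩ := hrel
    have hx1 : cA ((u ^ A : Circle) : ℂ) ((s : ℂ)) (pt r) *
        cq ((x : ℂ) ^ l) = pt r := congrArg Prod.fst hx
    have hx2 : (x : ℂ) ^ m * (((u ^ (-C) : Circle) : ℂ) * ((r:ℝ):ℂ)) = ((r:ℝ):ℂ) :=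
      congrArg (fun P => P.2.1) hx
    have hx3 : (x : ℂ) ^ n * ((t₂ : ℂ) * ((r:ℝ):ℂ)) = ((r:ℝ):ℂ) :=
      congrArg (fun P => P.2.2) hx
    have hrc : ((r:ℝ):ℂ) ≠ 0 := by exact_mod_cast hrne
    obtain ⟨k1, k2⟩ := key _ _ _ r hrne hx1
    -- Translate to equations in the group `Circle`.
    have E1 : u ^ A * x ^ l = 1 := by
      rw [← Circle.coe_inj, Circle.coe_mul, circle_coe_pow, Circle.coe_one]
      exact k1
    have E2 : s * (x ^ l)⁻¹ = 1 := by
      rw [← Circle.coe_inj, Circle.coe_mul, Circle.coe_inv_eq_conj, circle_coe_pow,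
        Circle.coe_one]
      exact k2
    have E3 : x ^ m * u ^ (-C) = 1 := by
      rw [← Circle.coe_inj, Circle.coe_mul, circle_coe_pow, Circle.coe_one]
      have : ((x : ℂ) ^ m * ((u ^ (-C) : Circle) : ℂ)) * ((r:ℝ):ℂ) = 1 * ((r:ℝ):ℂ) := by
        rw [one_mul]; linear_combination hx2
      exact mul_right_cancel₀ hrc this
    have E4 : x ^ n * t₂ = 1 := by
      rw [← Circle.coe_inj, Circle.coe_mul, circle_coe_pow, Circle.coe_one]
      have : ((x : ℂ) ^ n * (t₂ : ℂ)) * ((r:ℝ):ℂ) = 1 * ((r:ℝ):ℂ) := by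
        rw [one_mul]; linear_combination hx3
      exact mul_right_cancel₀ hrc this
    -- Derive `u = 1`, then `x = 1`, then `s = t₂ = 1`.
    have hUA : u ^ A = (x ^ l)⁻¹ := by
      have := mul_eq_one_iff_eq_inv.mp E1
      exact this
    have hUC : u ^ C = x ^ (m : ℕ) := by
      have h' : u ^ (-C) = (x ^ m)⁻¹ := by
        rw [mul_comm] at E3
        exact mul_eq_one_iff_eq_inv.mp E3
      rw [zpow_neg] at h'
      exact inv_injective h'
    have hu1 : u = 1 := by
      have : u = (u ^ C) ^ (l : ℤ) * (u ^ A) ^ (m : ℤ) := by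
        rw [← zpow_mul, ← zpow_mul, ← zpow_add, mul_comm C (l:ℤ), mul_comm A (m:ℤ), hBez,
          zpow_one]
      rw [this, hUC, hUA]
      rw [← zpow_natCast x m, ← zpow_natCast x l]
      rw [← zpow_mul, ← inv_zpow, ← zpow_mul, inv_zpow, ← zpow_neg, ← zpow_add]
      rw [mul_comm (l:ℤ) (m:ℤ)]
      ring_nf
      exact zpow_zero x
    have hxl1 : x ^ l = 1 := by
      have : u ^ A = 1 := by rw [hu1, one_zpow]
      rw [this, one_mul] at E1
      exact E1
    have hxm1 : x ^ m = 1 := by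
      have : u ^ (-C) = 1 := by rw [hu1, one_zpow]
      rw [this, mul_one] at E3
      exact E3
    have hx1' : x = 1 := by
      have : x = (x ^ l) ^ (C : ℤ) * (x ^ m) ^ (A : ℤ) := by
        rw [← zpow_natCast x l, ← zpow_natCast x m, ← zpow_mul, ← zpow_mul, ← zpow_add, hBez,
          zpow_one]
      rw [this, hxl1, hxm1, one_zpow, one_zpow, one_mul]
    have hs1 : s = 1 := by
      rw [hx1', one_pow, inv_one, mul_one] at E2
      exact E2
    have ht1 : t₂ = 1 := by
      rw [hx1', one_pow, one_mul] at E4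
      exact E4
    rw [hs1, ht1, hu1]
    rfl
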